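/- Let k ≥ 1 and let G be a (P₃ ∪ kP₁)-free graph and S ⊆ V(G). If G−S has at least k+1 connected components, then every vertex of S having a neighbor in G−S is adjacent to all vertices of some component of G−S. -/
import Mathlib


open SimpleGraph

variable {V : Type*} {α : Type*}

/-- The graph `G − S` obtained by deleting the vertices of `S`. -/
abbrev GDel (G : SimpleGraph V) (S : Set V) : SimpleGraph (Sᶜ : Set V) :=
  G.induce (Sᶜ : Set V)

/-- `w(G − S)`: the number of connected components of `G − S`. -/
noncomputable def numComp (G : SimpleGraph V) (S : Set V) : ℕ :=
  Nat.card (GDel G S).ConnectedComponent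

/-- `S` is a cutset of `G`: deleting `S` disconnects the graph. -/
def IsCutset (G : SimpleGraph V) (S : Set V) : Prop :=
  ¬ (GDel G S).Preconnected

/-- `G` is `t`-tough. -/
def Tough (t : ℝ) (G : SimpleGraph V) : Prop :=
  ∀ S : Set V, IsCutset G S → t * numComp G S ≤ S.ncard

open Classical in
/-- The vertex connectivity of `G`. -/
noncomputable def kappa [Fintype V] (G : SimpleGraph V) : ℕ :=
  if ∃ S : Set V, IsCutset G S then
    sInf {n | ∃ S : Set V, S.ncard = n ∧ IsCutset G S}
  else Fintype.card V - 1

/-- The independence number of `G`. -/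
noncomputable def indepNum [Fintype V] (G : SimpleGraph V) : ℕ :=
  sSup {n | ∃ T : Set V, T.ncard = n ∧ ∀ u ∈ T, ∀ v ∈ T, u ≠ v → ¬ G.Adj u v}

/-- The toughness of `G` (as a real number; meaningful for noncomplete graphs). -/
noncomputable def toughness [Fintype V] (G : SimpleGraph V) : ℝ :=
  sInf {r : ℝ | ∃ S : Set V, IsCutset G S ∧ r = S.ncard / numComp G S}

/-- The graph `P₃ ∪ kP₁`. -/
def P3kP1 (k : ℕ) : SimpleGraph (Fin 3 ⊕ Fin k) :=
  SimpleGraph.fromRel (fun x y =>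
    (x = Sum.inl 0 ∧ y = Sum.inl 1) ∨ (x = Sum.inl 1 ∧ y = Sum.inl 2))

/-- `G` contains no induced copy of `H`. -/
def IndFree (H : SimpleGraph α) (G : SimpleGraph V) : Prop :=
  ¬ ∃ f : α ↪ V, ∀ a b, H.Adj a b ↔ G.Adj (f a) (f b)

/-- A connected component of `G − S` is complete (its vertices form a clique in `G`). -/
def CompComplete (G : SimpleGraph V) (S : Set V)
    (C : (GDel G S).ConnectedComponent) : Prop :=
  ∀ u v : (Sᶜ : Set V), u ∈ C.supp → v ∈ C.supp → (u : V) ≠ v → G.Adj u v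

/-- The vertex set of `G` can be covered by at most `n` pairwise disjoint paths. -/
def PathCover (G : SimpleGraph V) (n : ℕ) : Prop :=
  ∃ k : ℕ, k ≤ n ∧ ∃ P : Fin k → Σ u : V, Σ v : V, G.Walk u v,
    (∀ i, (P i).2.2.IsPath) ∧
    (∀ i j, i ≠ j → ∀ x, x ∈ (P i).2.2.support → x ∉ (P j).2.2.support) ∧
    (∀ x : V, ∃ i, x ∈ (P i).2.2.support)


section Aux

private lemma walk_flip {W : Type*} {G' : SimpleGraph W} (P : W → Prop) :
    ∀ {x y : W}, G'.Walk x y → P x → ¬ P y →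
      ∃ a b, G'.Adj a b ∧ P a ∧ ¬ P b := by
  intro x y p
  induction p with
  | nil => intro h h'; exact absurd h h'
  | @cons x m y h q ih =>
      intro hx hy
      by_cases hm : P m
      · exact ih hm hy
      · exact ⟨x, m, h, hx, hm⟩

private lemma P3kP1_not_adj_inr (k : ℕ) (j : Fin k) (x : Fin 3 ⊕ Fin k) :
    ¬ (P3kP1 k).Adj (Sum.inr j) x := by
  intro hadj
  rw [P3kP1, SimpleGraph.fromRel_adj] at hadj
  rcases hadj.2 with (⟨h, h'⟩ | ⟨h, h'⟩) | (⟨h, h'⟩ | ⟨h, h'⟩) <;> simp_all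

end Aux

/-- If `G` is `(P₃ ∪ kP₁)`-free and `G − S` has at least `k + 1` components,
then every vertex of `S` with a neighbor in `G − S` is adjacent to all vertices
of some component of `G − S`. -/
theorem stmt_5 {V : Type*} [Fintype V] (k : ℕ) (hk : 1 ≤ k) (G : SimpleGraph V)
    (hfree : IndFree (P3kP1 k) G) (S : Set V) (hw : k + 1 ≤ numComp G S) :
    ∀ v ∈ S, (∃ u : (Sᶜ : Set V), G.Adj v u) →
      ∃ C : (GDel G S).ConnectedComponent,
        ∀ u : (Sᶜ : Set V), u ∈ C.supp → G.Adj v u := by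
  classical
  intro v hvS hnb
  by_contra hc
  push_neg at hc
  choose w hw1 hw2 using hc
  obtain ⟨u, hu⟩ := hnb
  have hreach : (GDel G S).Reachable u (w ((GDel G S).connectedComponentMk u)) := by
    have := hw1 ((GDel G S).connectedComponentMk u)
    rw [ConnectedComponent.mem_supp_iff] at this
    exact ((ConnectedComponent.eq).mp this).symm
  obtain ⟨p⟩ := hreach
  obtain ⟨a, b, hab, hva, hvb⟩ :=
    walk_flip (fun x : (Sᶜ : Set V) => G.Adj v ↑x) p hu
      (hw2 ((GDel G S).connectedComponentMk u))
  set C₀ := (GDel G S).connectedComponentMk a with hC₀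
  have hbC₀ : (GDel G S).connectedComponentMk b = C₀ :=
    (ConnectedComponent.eq).mpr hab.symm.reachable
  have cross : ∀ (x y : (Sᶜ : Set V)),
      (GDel G S).connectedComponentMk x ≠ (GDel G S).connectedComponentMk y →
      ¬ G.Adj ↑x ↑y := by
    intro x y hne hxy
    exact hne ((ConnectedComponent.eq).mpr (Adj.reachable (by exact hxy)))
  haveI : Finite ((GDel G S).ConnectedComponent) := Quot.finite _
  haveI : Fintype ((GDel G S).ConnectedComponent) := Fintype.ofFinite _
  have hcard : k ≤ Fintype.card {C : (GDel G S).ConnectedComponent // C ≠ C₀} := by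
    have h1 : Fintype.card {C : (GDel G S).ConnectedComponent // ¬ (C = C₀)}
        = Fintype.card ((GDel G S).ConnectedComponent) - 1 := by
      rw [Fintype.card_subtype_compl, Fintype.card_subtype_eq]
    have h1' : Fintype.card {C : (GDel G S).ConnectedComponent // C ≠ C₀}
        = Fintype.card ((GDel G S).ConnectedComponent) - 1 := h1
    have h2 : k + 1 ≤ Fintype.card ((GDel G S).ConnectedComponent) := by
      rwa [numComp, Nat.card_eq_fintype_card] at hw
    omega
  obtain ⟨e⟩ := Function.Embedding.nonempty_of_card_le
    ((Fintype.card_fin k).symm ▸ hcard)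
  set f : Fin 3 ⊕ Fin k → V :=
    Sum.elim (![v, ↑a, ↑b]) (fun i => ↑(w ((e i) : (GDel G S).ConnectedComponent))) with hf
  have hwcomp : ∀ i : Fin k,
      (GDel G S).connectedComponentMk (w ((e i) : (GDel G S).ConnectedComponent))
        = ((e i) : (GDel G S).ConnectedComponent) := by
    intro i
    exact (ConnectedComponent.mem_supp_iff _ _).mp (hw1 _)
  have hab' : G.Adj ↑a ↑b := hab
  have hvA : v ≠ ↑a := fun h => a.2 (h ▸ hvS)
  have hvB : v ≠ ↑b := fun h => b.2 (h ▸ hvS)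
  have hAB : (↑a : V) ≠ ↑b := hab'.ne
  have hvec : Function.Injective (![v, (↑a : V), ↑b]) := by
    intro i j hij
    fin_cases i <;> fin_cases j <;>
      simp only [Matrix.cons_val_zero, Matrix.cons_val_one, Matrix.head_cons,
        Matrix.cons_val_two, Matrix.tail_cons] at hij <;>
      first
        | rfl
        | exact absurd hij hvA
        | exact absurd hij hvB
        | exact absurd hij hAB
        | exact absurd hij.symm hvA
        | exact absurd hij.symm hvB
        | exact absurd hij.symm hAB
  -- non-adjacency of the isolated vertices with the P₃ vertices and each other
  have navw : ∀ i : Fin k, ¬ G.Adj v ↑(w ((e i) : (GDel G S).ConnectedComponent)) :=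
    fun i => hw2 _
  have naaw : ∀ i : Fin k, ¬ G.Adj ↑a ↑(w ((e i) : (GDel G S).ConnectedComponent)) := by
    intro i
    refine cross _ _ ?_
    rw [hwcomp i, ← hC₀]
    exact fun h => (e i).2 h.symm
  have nabw : ∀ i : Fin k, ¬ G.Adj ↑b ↑(w ((e i) : (GDel G S).ConnectedComponent)) := by
    intro i
    refine cross _ _ ?_
    rw [hwcomp i, hbC₀]
    exact fun h => (e i).2 h.symm
  have nww : ∀ i j : Fin k, i ≠ j →
      ¬ G.Adj ↑(w ((e i) : (GDel G S).ConnectedComponent))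
        ↑(w ((e j) : (GDel G S).ConnectedComponent)) := by
    intro i j hij
    refine cross _ _ ?_
    rw [hwcomp i, hwcomp j]
    intro h
    exact hij (e.injective (Subtype.coe_injective h))
  have hinj : Function.Injective f := by
    intro x y hxy
    match x, y with
    | Sum.inl i, Sum.inl j =>
        simp only [hf, Sum.elim_inl] at hxy
        exact congrArg Sum.inl (hvec hxy)
    | Sum.inl i, Sum.inr j =>
        exfalso
        simp only [hf, Sum.elim_inl, Sum.elim_inr] at hxy
        have hyS : (↑(w ((e j) : (GDel G S).ConnectedComponent)) : V) ∉ S :=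
          (w _).2
        fin_cases i <;>
          simp only [Matrix.cons_val_zero, Matrix.cons_val_one, Matrix.head_cons,
            Matrix.cons_val_two, Matrix.tail_cons] at hxy
        · exact hyS (hxy ▸ hvS)
        · have : (GDel G S).connectedComponentMk a
              = (GDel G S).connectedComponentMk (w ((e j) : (GDel G S).ConnectedComponent)) := by
            congr 1
            exact Subtype.coe_injective hxy
          rw [hwcomp j, ← hC₀] at this
          exact (e j).2 this.symm
        · have : (GDel G S).connectedComponentMk b
              = (GDel G S).connectedComponentMk (w ((e j) : (GDel G S).ConnectedComponent)) := by
            congr 1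
            exact Subtype.coe_injective hxy
          rw [hwcomp j, hbC₀] at this
          exact (e j).2 this.symm
    | Sum.inr i, Sum.inl j =>
        exfalso
        simp only [hf, Sum.elim_inl, Sum.elim_inr] at hxy
        have hyS : (↑(w ((e i) : (GDel G S).ConnectedComponent)) : V) ∉ S :=
          (w _).2
        fin_cases j <;>
          simp only [Matrix.cons_val_zero, Matrix.cons_val_one, Matrix.head_cons,
            Matrix.cons_val_two, Matrix.tail_cons] at hxy
        · exact hyS (hxy.symm ▸ hvS)
        · have : (GDel G S).connectedComponentMk a
              = (GDel G S).connectedComponentMk (w ((e i) : (GDel G S).ConnectedComponent)) := by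
            congr 1
            exact Subtype.coe_injective hxy.symm
          rw [hwcomp i, ← hC₀] at this
          exact (e i).2 this.symm
        · have : (GDel G S).connectedComponentMk b
              = (GDel G S).connectedComponentMk (w ((e i) : (GDel G S).ConnectedComponent)) := by
            congr 1
            exact Subtype.coe_injective hxy.symm
          rw [hwcomp i, hbC₀] at this
          exact (e i).2 this.symm
    | Sum.inr i, Sum.inr j =>
        simp only [hf, Sum.elim_inr] at hxy
        have h1 : w ((e i) : (GDel G S).ConnectedComponent)
            = w ((e j) : (GDel G S).ConnectedComponent) := Subtype.coe_injective hxy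
        have h2 : ((e i) : (GDel G S).ConnectedComponent)
            = ((e j) : (GDel G S).ConnectedComponent) := by
          rw [← hwcomp i, ← hwcomp j, h1]
        exact congrArg Sum.inr (e.injective (Subtype.coe_injective h2))
  have hiff : ∀ x y, (P3kP1 k).Adj x y ↔ G.Adj (f x) (f y) := by
    intro x y
    match x, y with
    | Sum.inl i, Sum.inl j =>
        fin_cases i <;> fin_cases j <;>
          simp only [hf, Sum.elim_inl, Matrix.cons_val_zero, Matrix.cons_val_one,
            Matrix.head_cons, Matrix.cons_val_two, Matrix.tail_cons, P3kP1,
            SimpleGraph.fromRel_adj] <;>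
          first
            | (refine iff_of_true ?_ ?_ <;> first
                | exact ⟨by simp, by simp⟩
                | exact hva
                | exact hva.symm
                | exact hab'
                | exact hab'.symm)
            | (refine iff_of_false ?_ ?_ <;> first
                | exact G.irrefl
                | exact hvb
                | exact fun h => hvb h.symm
                | simp)
    | Sum.inl i, Sum.inr j =>
        refine iff_of_false (fun h => P3kP1_not_adj_inr k j _ h.symm) ?_
        simp only [hf, Sum.elim_inl, Sum.elim_inr]
        fin_cases i <;>
          simp only [Matrix.cons_val_zero, Matrix.cons_val_one, Matrix.head_cons,
            Matrix.cons_val_two, Matrix.tail_cons]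
        · exact navw j
        · exact naaw j
        · exact nabw j
    | Sum.inr i, Sum.inl j =>
        refine iff_of_false (P3kP1_not_adj_inr k i _) ?_
        simp only [hf, Sum.elim_inl, Sum.elim_inr]
        fin_cases j <;>
          simp only [Matrix.cons_val_zero, Matrix.cons_val_one, Matrix.head_cons,
            Matrix.cons_val_two, Matrix.tail_cons]
        · exact fun h => navw i h.symm
        · exact fun h => naaw i h.symm
        · exact fun h => nabw i h.symm
    | Sum.inr i, Sum.inr j =>
        refine iff_of_false (P3kP1_not_adj_inr k i _) ?_
        simp only [hf, Sum.elim_inr]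
        by_cases hij : i = j
        · subst hij; exact G.irrefl
        · exact nww i j hij
  exact hfree ⟨⟨f, hinj⟩, hiff⟩
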